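/- arXiv:1410.2976 — 2 statements merged into one kernel-verified Lean document; each statement's English description precedes it below -/
import Mathlib

section
/- Suppose there exists a numéraire strategy η with value N = η · P > 0. Then to every self-financing investment-consumption strategy H with H_0 = 0 there corresponds a pure-investment strategy K, defined by K_t = H_t + η_t Σ_{s=1}^{t−1} (H_s − H_{s+1}) · P_s / N_s, satisfying (K_t − K_{t+1}) · P_t = 0 for all t; and if H_{T+1} = 0 then K_T · P_T = N_T Σ_{s=1}^T (H_s − H_{s+1}) · P_s / N_s ≥ 0. Consequently, there exists an investment-consumption arbitrage if and only if there exists a pure-investment arbitrage. -/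
open MeasureTheory Filter

noncomputable section

/-- Euclidean dot product on `Fin n → ℝ`. -/
def dotp {n : ℕ} (a b : Fin n → ℝ) : ℝ := ∑ i, a i * b i

/-- A discrete-time local martingale: there is a localizing sequence of stopping
times tending to infinity such that each stopped process is a true martingale. -/
def IsLocalMartingale {Ω : Type*} {m : MeasurableSpace Ω} {E : Type*}
    [NormedAddCommGroup E] [NormedSpace ℝ E] [CompleteSpace E]
    (ℱ : MeasureTheory.Filtration ℕ m) (μ : Measure Ω) (M : ℕ → Ω → E) : Prop :=
  ∃ τ : ℕ → Ω → ℕ, (∀ N, IsStoppingTime ℱ (fun ω => ((τ N ω : ℕ) : WithTop ℕ))) ∧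
    (∀ ω, Tendsto (fun N => τ N ω) atTop atTop) ∧
    ∀ N, Martingale (MeasureTheory.stoppedProcess M (fun ω => ((τ N ω : ℕ) : WithTop ℕ))) ℱ μ

/-- A martingale deflator: a strictly positive adapted process `Y` with `PY` a
true martingale. -/
def IsMartDeflator {Ω : Type*} {m : MeasurableSpace Ω} {n : ℕ}
    (ℱ : MeasureTheory.Filtration ℕ m) (μ : Measure Ω)
    (P : ℕ → Ω → Fin n → ℝ) (Y : ℕ → Ω → ℝ) : Prop :=
  Adapted ℱ Y ∧ (∀ t, ∀ᵐ ω ∂μ, 0 < Y t ω) ∧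
    Martingale (fun t ω => Y t ω • P t ω) ℱ μ

/-- A pure-investment strategy: predictable, self-financing with zero
consumption (convention `H 0 = H 1`). -/
def PureInvestment {Ω : Type*} {m : MeasurableSpace Ω} {n : ℕ}
    (ℱ : MeasureTheory.Filtration ℕ m) (μ : Measure Ω)
    (P H : ℕ → Ω → Fin n → ℝ) : Prop :=
  (∀ t, StronglyMeasurable[ℱ t] (H (t + 1))) ∧ H 0 = H 1 ∧
    ∀ t, 1 ≤ t → ∀ᵐ ω ∂μ, dotp (H t ω - H (t + 1) ω) (P t ω) = 0

/-- An investment-consumption arbitrage over the horizon `T`: a predictable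
strategy, starting from zero (`H 0 = 0`, so `C_0 = -H_1 ⬝ P_0`), liquidated at
`T` (`H (T+1) = 0`), with nonnegative consumption which is strictly positive at
some time with positive probability. -/
def InvConsArbitrage {Ω : Type*} {m : MeasurableSpace Ω} {n : ℕ}
    (ℱ : MeasureTheory.Filtration ℕ m) (μ : Measure Ω)
    (P H : ℕ → Ω → Fin n → ℝ) (T : ℕ) : Prop :=
  (∀ t, StronglyMeasurable[ℱ t] (H (t + 1))) ∧ (∀ ω, H 0 ω = 0) ∧
    (∀ ω, H (T + 1) ω = 0) ∧
    (∀ t, t ≤ T → ∀ᵐ ω ∂μ, 0 ≤ dotp (H t ω - H (t + 1) ω) (P t ω)) ∧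
    0 < μ {ω | ∃ t ≤ T, 0 < dotp (H t ω - H (t + 1) ω) (P t ω)}

/-- A terminal-consumption arbitrage: an investment-consumption arbitrage whose
terminal wealth is strictly positive with positive probability. -/
def TerminalConsArbitrage {Ω : Type*} {m : MeasurableSpace Ω} {n : ℕ}
    (ℱ : MeasureTheory.Filtration ℕ m) (μ : Measure Ω)
    (P H : ℕ → Ω → Fin n → ℝ) (T : ℕ) : Prop :=
  InvConsArbitrage ℱ μ P H T ∧ 0 < μ {ω | 0 < dotp (H T ω) (P T ω)}

/-- A pure-investment arbitrage: a terminal-consumption arbitrage with no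
intermediate consumption. -/
def PureInvArbitrage {Ω : Type*} {m : MeasurableSpace Ω} {n : ℕ}
    (ℱ : MeasureTheory.Filtration ℕ m) (μ : Measure Ω)
    (P H : ℕ → Ω → Fin n → ℝ) (T : ℕ) : Prop :=
  TerminalConsArbitrage ℱ μ P H T ∧
    ∀ t, 1 ≤ t → t < T → ∀ᵐ ω ∂μ, dotp (H t ω - H (t + 1) ω) (P t ω) = 0

/-- A complete market: every `ℱ T`-measurable payoff is replicable by a
pure-investment strategy. -/
def MarketComplete {Ω : Type*} {m : MeasurableSpace Ω} {n : ℕ}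
    (ℱ : MeasureTheory.Filtration ℕ m) (μ : Measure Ω)
    (P : ℕ → Ω → Fin n → ℝ) : Prop :=
  ∀ T : ℕ, 0 < T → ∀ ξ : Ω → ℝ, StronglyMeasurable[ℱ T] ξ →
    ∃ H : ℕ → Ω → Fin n → ℝ, PureInvestment ℱ μ P H ∧
      (fun ω => dotp (H T ω) (P T ω)) =ᵐ[μ] ξ

/-- The pure-investment strategy obtained from an investment-consumption
strategy `H` by reinvesting all consumption into the numéraire `η`. -/
def reinvest {Ω : Type*} {n : ℕ} (P η H : ℕ → Ω → Fin n → ℝ) (t : ℕ) (ω : Ω) :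
    Fin n → ℝ :=
  H t ω + (∑ s ∈ Finset.Icc 1 (t - 1),
    dotp (H s ω - H (s + 1) ω) (P s ω) / dotp (η s ω) (P s ω)) • η t ω

lemma dotp_sub_left {n : ℕ} (a b c : Fin n → ℝ) :
    dotp (a - b) c = dotp a c - dotp b c := by
  simp [dotp, sub_mul, Finset.sum_sub_distrib]

lemma dotp_add_left {n : ℕ} (a b c : Fin n → ℝ) :
    dotp (a + b) c = dotp a c + dotp b c := by
  simp [dotp, add_mul, Finset.sum_add_distrib]

lemma dotp_smul_left {n : ℕ} (r : ℝ) (a c : Fin n → ℝ) :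
    dotp (r • a) c = r * dotp a c := by
  simp [dotp, Finset.mul_sum, mul_assoc]

lemma dotp_zero_left {n : ℕ} (c : Fin n → ℝ) : dotp 0 c = 0 := by simp [dotp]

lemma key {n : ℕ} (Ht Ht1 ηt ηt1 Pt : Fin n → ℝ) (a b N : ℝ)
    (hN : dotp ηt Pt = N) (h1 : dotp ηt1 Pt = N) (h2 : 0 < N)
    (hab : b = a + dotp (Ht - Ht1) Pt / N) :
    dotp ((Ht + a • ηt) - (Ht1 + b • ηt1)) Pt = 0 := by
  have hC := dotp_sub_left Ht Ht1 Pt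
  rw [hC] at hab
  rw [dotp_sub_left, dotp_add_left, dotp_add_left, dotp_smul_left, dotp_smul_left,
    hN, h1, hab]
  field_simp
  ring

lemma measurable_dotp {α : Type*} {mα : MeasurableSpace α} {n : ℕ} {a b : α → Fin n → ℝ}
    (ha : Measurable a) (hb : Measurable b) : Measurable fun x => dotp (a x) (b x) := by
  unfold dotp
  exact Finset.measurable_sum _ fun i _ =>
    ((measurable_pi_apply i).comp ha).mul ((measurable_pi_apply i).comp hb)

/-- given a numéraire strategy `η`, every self-financing
investment-consumption strategy `H` starting from `0` yields a pure-investment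
strategy `K = reinvest P η H` with `(K_t - K_{t+1}) ⬝ P_t = 0` and, when
`H_{T+1} = 0`, terminal wealth `K_T ⬝ P_T = N_T ∑_{s=1}^T C_s / N_s ≥ 0`;
consequently there is an investment-consumption arbitrage iff there is a
pure-investment arbitrage. -/
theorem stmt11 {Ω : Type*} {m : MeasurableSpace Ω} (μ : Measure Ω) [IsProbabilityMeasure μ]
    (ℱ : MeasureTheory.Filtration ℕ m) {n : ℕ}
    (P : ℕ → Ω → Fin n → ℝ) (hP : Adapted ℱ P)
    (η : ℕ → Ω → Fin n → ℝ) (hη : PureInvestment ℱ μ P η)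
    (hN : ∀ t, ∀ᵐ ω ∂μ, 0 < dotp (η t ω) (P t ω)) :
    (∀ H : ℕ → Ω → Fin n → ℝ,
      (∀ ω, H 0 ω = 0) →
      (∀ t, StronglyMeasurable[ℱ t] (H (t + 1))) →
      (∀ t, 1 ≤ t → ∀ᵐ ω ∂μ, 0 ≤ dotp (H t ω - H (t + 1) ω) (P t ω)) →
      (∀ t, 1 ≤ t → ∀ᵐ ω ∂μ,
        dotp (reinvest P η H t ω - reinvest P η H (t + 1) ω) (P t ω) = 0) ∧
      ∀ T : ℕ, (∀ ω, H (T + 1) ω = 0) → ∀ᵐ ω ∂μ,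
        dotp (reinvest P η H T ω) (P T ω)
            = dotp (η T ω) (P T ω) *
              ∑ s ∈ Finset.Icc 1 T,
                dotp (H s ω - H (s + 1) ω) (P s ω) / dotp (η s ω) (P s ω) ∧
          0 ≤ dotp (reinvest P η H T ω) (P T ω)) ∧
    ((∃ (T : ℕ) (H : ℕ → Ω → Fin n → ℝ), 0 < T ∧ InvConsArbitrage ℱ μ P H T) ↔
      (∃ (T : ℕ) (H : ℕ → Ω → Fin n → ℝ), 0 < T ∧ PureInvArbitrage ℱ μ P H T)) := by
  classical
  obtain ⟨hηmeas, hη01, hηsf⟩ := hη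
  have hNP : ∀ t, ∀ᵐ ω ∂μ, dotp (η (t + 1) ω) (P t ω) = dotp (η t ω) (P t ω) := by
    intro t
    rcases Nat.eq_zero_or_pos t with rfl | ht
    · filter_upwards with ω
      rw [← hη01]
    · filter_upwards [hηsf t ht] with ω h
      rw [dotp_sub_left] at h
      linarith
  constructor
  · intro H hH0 hHpred hHC
    constructor
    · intro t ht
      obtain ⟨k, rfl⟩ : ∃ k, t = k + 1 := ⟨t - 1, by omega⟩
      filter_upwards [hN (k + 1), hNP (k + 1)] with ω hNω hNPω
      unfold reinvest
      simp only [Nat.add_sub_cancel]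
      exact key _ _ _ _ _ _ _ _ rfl hNPω hNω (Finset.sum_Icc_succ_top (by omega) _)
    · intro T hHT1
      have hCall : ∀ᵐ ω ∂μ, ∀ s, 1 ≤ s → 0 ≤ dotp (H s ω - H (s + 1) ω) (P s ω) := by
        rw [ae_all_iff]
        intro s
        rcases Nat.eq_zero_or_pos s with rfl | hs
        · filter_upwards with ω h; omega
        · filter_upwards [hHC s hs] with ω h _; exact h
      have hNall : ∀ᵐ ω ∂μ, ∀ s, 0 < dotp (η s ω) (P s ω) := ae_all_iff.2 hN
      rcases Nat.eq_zero_or_pos T with rfl | hT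
      · filter_upwards with ω
        have h0 : reinvest P η H 0 ω = 0 := by
          unfold reinvest
          simp [hH0 ω]
        rw [h0, dotp_zero_left]
        simp
      · obtain ⟨k, rfl⟩ : ∃ k, T = k + 1 := ⟨T - 1, by omega⟩
        filter_upwards [hCall, hNall] with ω hCω hNω
        have hne : dotp (η (k + 1) ω) (P (k + 1) ω) ≠ 0 := ne_of_gt (hNω (k + 1))
        have hform : dotp (reinvest P η H (k + 1) ω) (P (k + 1) ω)
            = dotp (η (k + 1) ω) (P (k + 1) ω) *
              ∑ s ∈ Finset.Icc 1 (k + 1),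
                dotp (H s ω - H (s + 1) ω) (P s ω) / dotp (η s ω) (P s ω) := by
          unfold reinvest
          simp only [Nat.add_sub_cancel]
          rw [dotp_add_left, dotp_smul_left, Finset.sum_Icc_succ_top (by omega), mul_add]
          have hdiv : dotp (η (k + 1) ω) (P (k + 1) ω) *
              (dotp (H (k + 1) ω - H (k + 1 + 1) ω) (P (k + 1) ω) /
                dotp (η (k + 1) ω) (P (k + 1) ω))
              = dotp (H (k + 1) ω - H (k + 1 + 1) ω) (P (k + 1) ω) := by
            field_simp
          rw [hdiv, hHT1 ω, sub_zero]
          ring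
        refine ⟨hform, ?_⟩
        rw [hform]
        exact mul_nonneg (le_of_lt (hNω (k + 1)))
          (Finset.sum_nonneg fun s hs =>
            div_nonneg (hCω s (Finset.mem_Icc.mp hs).1) (le_of_lt (hNω s)))
  · constructor
    · rintro ⟨T, H, hT, hpred, hH0, hHT1, hCnn, hCpos⟩
      set K : ℕ → Ω → Fin n → ℝ := fun t ω =>
        if 1 ≤ t ∧ t ≤ T then H t ω + (∑ s ∈ Finset.range t,
          dotp (H s ω - H (s + 1) ω) (P s ω) / dotp (η s ω) (P s ω)) • η t ω
        else 0 with hKdef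
      -- pointwise measurability helpers
      have hHs : ∀ s, StronglyMeasurable[ℱ s] (H s) := by
        intro s
        rcases Nat.eq_zero_or_pos s with rfl | hs
        · have : H 0 = fun _ => (0 : Fin n → ℝ) := funext hH0
          rw [this]; exact stronglyMeasurable_const
        · obtain ⟨k, rfl⟩ : ∃ k, s = k + 1 := ⟨s - 1, by omega⟩
          exact (hpred k).mono (ℱ.mono (Nat.le_succ k))
      have hηs : ∀ s, StronglyMeasurable[ℱ s] (η s) := by
        intro s
        rcases Nat.eq_zero_or_pos s with rfl | hs
        · rw [hη01]; exact hηmeas 0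
        · obtain ⟨k, rfl⟩ : ∃ k, s = k + 1 := ⟨s - 1, by omega⟩
          exact (hηmeas k).mono (ℱ.mono (Nat.le_succ k))
      have hCmeas : ∀ s, Measurable[ℱ s]
          (fun ω => dotp (H s ω - H (s + 1) ω) (P s ω)) := fun s =>
        measurable_dotp ((hHs s).measurable.sub (hpred s).measurable) (hP s)
      have hNmeas : ∀ s, Measurable[ℱ s]
          (fun ω => dotp (η s ω) (P s ω)) := fun s =>
        measurable_dotp (hηs s).measurable (hP s)
      have hBmeas : ∀ t, Measurable[ℱ t] (fun ω => ∑ s ∈ Finset.range (t + 1),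
          dotp (H s ω - H (s + 1) ω) (P s ω) / dotp (η s ω) (P s ω)) := by
        intro t
        refine Finset.measurable_sum _ fun s hs => ?_
        have hst : s ≤ t := by
          have := Finset.mem_range.mp hs; omega
        exact ((hCmeas s).mono (ℱ.mono hst) le_rfl).div
          ((hNmeas s).mono (ℱ.mono hst) le_rfl)
      -- global a.e. good set
      have hG : ∀ᵐ ω ∂μ, (∀ s, 0 < dotp (η s ω) (P s ω)) ∧
          (∀ s, dotp (η (s + 1) ω) (P s ω) = dotp (η s ω) (P s ω)) ∧
          (∀ s, s ≤ T → 0 ≤ dotp (H s ω - H (s + 1) ω) (P s ω)) := by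
        refine ((ae_all_iff.2 hN).and ((ae_all_iff.2 hNP).and ?_)).mono
          (fun ω h => ⟨h.1, h.2.1, h.2.2⟩)
        rw [ae_all_iff]
        intro s
        by_cases hs : s ≤ T
        · filter_upwards [hCnn s hs] with ω h _; exact h
        · filter_upwards with ω h; omega
      -- pointwise description of K
      have hmain : ∀ᵐ ω ∂μ,
          (∀ t, t < T → dotp (K t ω - K (t + 1) ω) (P t ω) = 0) ∧
          dotp (K T ω) (P T ω) = dotp (η T ω) (P T ω) * ∑ s ∈ Finset.range (T + 1),
            dotp (H s ω - H (s + 1) ω) (P s ω) / dotp (η s ω) (P s ω) := by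
        filter_upwards [hG] with ω hg
        obtain ⟨hg1, hg2, hg3⟩ := hg
        have hKt : ∀ t, t ≤ T → K t ω = H t ω + (∑ s ∈ Finset.range t,
            dotp (H s ω - H (s + 1) ω) (P s ω) / dotp (η s ω) (P s ω)) • η t ω := by
          intro t htT
          rcases Nat.eq_zero_or_pos t with rfl | ht
          · simp [hKdef, hH0 ω]
          · simp only [hKdef]
            rw [if_pos ⟨ht, htT⟩]
        constructor
        · intro t htT
          rw [hKt t (le_of_lt htT), hKt (t + 1) htT]
          exact key _ _ _ _ _ _ _ _ rfl (hg2 t) (hg1 t) (Finset.sum_range_succ _ t)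
        · rw [hKt T le_rfl, dotp_add_left, dotp_smul_left, Finset.sum_range_succ, mul_add]
          have hdiv : dotp (η T ω) (P T ω) *
              (dotp (H T ω - H (T + 1) ω) (P T ω) / dotp (η T ω) (P T ω))
              = dotp (H T ω - H (T + 1) ω) (P T ω) := by
            have := ne_of_gt (hg1 T); field_simp
          rw [hdiv, hHT1 ω, sub_zero]
          ring
      have hK1 : ∀ ω, K (T + 1) ω = 0 := by
        intro ω
        simp only [hKdef]
        rw [if_neg]
        rintro ⟨-, h⟩; omega
      -- positivity of terminal wealth
      have hBpos : 0 < μ {ω | 0 < dotp (K T ω) (P T ω)} := by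
        refine lt_of_lt_of_le hCpos (measure_mono_ae ?_)
        filter_upwards [hmain, hG] with ω hm hg hx
        obtain ⟨t, htT, htpos⟩ := hx
        show 0 < dotp (K T ω) (P T ω)
        rw [hm.2]
        refine mul_pos (hg.1 T) (Finset.sum_pos' ?_ ⟨t, Finset.mem_range.mpr (by omega), ?_⟩)
        · intro s hs
          exact div_nonneg (hg.2.2 s (by have := Finset.mem_range.mp hs; omega))
            (le_of_lt (hg.1 s))
        · exact div_pos htpos (hg.1 t)
      refine ⟨T, K, hT, ⟨⟨?_, ?_, hK1, ?_, ?_⟩, hBpos⟩, ?_⟩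
      · -- predictable
        intro t
        by_cases h : t + 1 ≤ T
        · have : K (t + 1) = fun ω => H (t + 1) ω + (∑ s ∈ Finset.range (t + 1),
              dotp (H s ω - H (s + 1) ω) (P s ω) / dotp (η s ω) (P s ω)) • η (t + 1) ω := by
            funext ω
            simp only [hKdef]
            rw [if_pos ⟨by omega, h⟩]
          rw [this]
          exact (hpred t).add (((hBmeas t).stronglyMeasurable).smul (hηmeas t))
        · have : K (t + 1) = fun _ => 0 := by
            funext ω
            simp only [hKdef]
            rw [if_neg (fun hc => h hc.2)]
          rw [this]
          exact stronglyMeasurable_const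
      · -- K 0 = 0
        intro ω; simp [hKdef]
      · -- nonneg consumption
        intro t htT
        filter_upwards [hmain, hG] with ω hm hg
        rcases lt_or_eq_of_le htT with hlt | rfl
        · rw [hm.1 t hlt]
        · rw [hK1 ω, sub_zero, hm.2]
          exact mul_nonneg (le_of_lt (hg.1 t)) (Finset.sum_nonneg fun s hs =>
            div_nonneg (hg.2.2 s (by have := Finset.mem_range.mp hs; omega))
              (le_of_lt (hg.1 s)))
      · -- positive consumption somewhere
        refine lt_of_lt_of_le hBpos (measure_mono ?_)
        intro ω hω
        exact ⟨T, le_rfl, by rw [hK1 ω, sub_zero]; exact hω⟩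
      · -- zero intermediate consumption
        intro t ht1 htT
        filter_upwards [hmain] with ω hm
        exact hm.1 t htT
    · rintro ⟨T, H, hT, ⟨⟨harb, -⟩, -⟩⟩
      exact ⟨T, H, hT, harb⟩
end
end

section
/- If M is a discrete-time local martingale and there is a non-random T > 0 with M_T ≥ 0 almost surely, then (M_t)_{0 ≤ t ≤ T} is a true martingale. -/
open MeasureTheory Filter

noncomputable section

/-- a discrete-time local martingale whose value at a non-random
time `T > 0` is a.s. nonnegative is a true martingale on `[0,T]` (encoded by
freezing at `T`), each `M t`, `t ≤ T`, being integrable. -/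
theorem stmt18 {Ω : Type*} {m : MeasurableSpace Ω} (μ : Measure Ω) [IsProbabilityMeasure μ]
    (ℱ : MeasureTheory.Filtration ℕ m)
    (M : ℕ → Ω → ℝ) (hM : IsLocalMartingale ℱ μ M)
    (T : ℕ) (hT : 0 < T) (hMT : ∀ᵐ ω ∂μ, 0 ≤ M T ω) :
    (∀ t, t ≤ T → Integrable (M t) μ) ∧
      Martingale (fun t ω => M (min t T) ω) ℱ μ := by
  classical
  obtain ⟨τ, hστ, hτi, hmart⟩ := hM
  -- the sets `{τ N > t}` are `ℱ t`-measurable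
  have hsF : ∀ N t, MeasurableSet[ℱ t] {ω | t < τ N ω} := by
    intro N t
    have h2 : {ω | t < τ N ω} = {ω | ((τ N ω : ℕ) : WithTop ℕ) ≤ t}ᶜ := by
      ext ω; simp [not_le]
    rw [h2]
    exact ((hστ N) t).compl
  have hsF' : ∀ N t, MeasurableSet[ℱ t] {ω | t ≤ τ N ω} := by
    intro N t
    have h2 : {ω | t ≤ τ N ω} = {ω | ((τ N ω : ℕ) : WithTop ℕ) < t}ᶜ := by
      ext ω; simp [not_lt]
    rw [h2]
    exact ((hστ N).measurableSet_lt_of_countable t).compl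
  -- indicator identities
  have hind1 : ∀ N t, Set.indicator {ω | t < τ N ω} (M (t + 1)) =
      Set.indicator {ω | t < τ N ω} (MeasureTheory.stoppedProcess M (fun ω => ((τ N ω : ℕ) : WithTop ℕ)) (t + 1)) := by
    intro N t
    funext ω
    by_cases h : t < τ N ω
    · have hm : min (t + 1) (τ N ω) = t + 1 := min_eq_left (Nat.succ_le_of_lt h)
      rw [Set.indicator_of_mem (show ω ∈ {ω | t < τ N ω} from h), Set.indicator_of_mem (show ω ∈ {ω | t < τ N ω} from h),
        stoppedProcess_eq_of_le (τ := fun ω => ((τ N ω : ℕ) : WithTop ℕ)) (WithTop.coe_le_coe.mpr (Nat.succ_le_of_lt h))]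
    · simp [Set.indicator_of_notMem, h]
  have hind0 : ∀ N t, Set.indicator {ω | t < τ N ω} (M t) =
      Set.indicator {ω | t < τ N ω} (MeasureTheory.stoppedProcess M (fun ω => ((τ N ω : ℕ) : WithTop ℕ)) t) := by
    intro N t
    funext ω
    by_cases h : t < τ N ω
    · have hm : min t (τ N ω) = t := min_eq_left (le_of_lt h)
      rw [Set.indicator_of_mem (show ω ∈ {ω | t < τ N ω} from h), Set.indicator_of_mem (show ω ∈ {ω | t < τ N ω} from h),
        stoppedProcess_eq_of_le (τ := fun ω => ((τ N ω : ℕ) : WithTop ℕ)) (WithTop.coe_le_coe.mpr (le_of_lt h))]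
    · simp [Set.indicator_of_notMem, h]
  -- integrability of indicators
  have hindint1 : ∀ N t, Integrable (Set.indicator {ω | t < τ N ω} (M (t + 1))) μ := by
    intro N t
    rw [hind1 N t]
    exact ((hmart N).integrable (t + 1)).indicator (ℱ.le t _ (hsF N t))
  have hindint0 : ∀ N t, Integrable (Set.indicator {ω | t < τ N ω} (M t)) μ := by
    intro N t
    rw [hind0 N t]
    exact ((hmart N).integrable t).indicator (ℱ.le t _ (hsF N t))
  -- key conditional-expectation identity
  have hkey : ∀ N t, μ[Set.indicator {ω | t < τ N ω} (M (t + 1)) | ℱ t]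
      =ᵐ[μ] Set.indicator {ω | t < τ N ω} (M t) := by
    intro N t
    rw [hind1 N t, hind0 N t]
    refine (condExp_indicator ((hmart N).integrable (t + 1)) (hsF N t)).trans ?_
    filter_upwards [(hmart N).condExp_ae_eq (Nat.le_succ t)] with ω hω
    by_cases h : t < τ N ω
    · simp only [Set.indicator_of_mem, h, Set.mem_setOf_eq]
      simpa using hω
    · simp [Set.indicator_of_notMem, h]
  -- one-step nonnegativity propagation
  have step : ∀ t, (∀ᵐ ω ∂μ, 0 ≤ M (t + 1) ω) → ∀ᵐ ω ∂μ, 0 ≤ M t ω := by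
    intro t h1
    have hN : ∀ N, ∀ᵐ ω ∂μ, 0 ≤ Set.indicator {ω | t < τ N ω} (M t) ω := by
      intro N
      have h0 : 0 ≤ᵐ[μ] Set.indicator {ω | t < τ N ω} (M (t + 1)) := by
        filter_upwards [h1] with ω hω
        exact Set.indicator_apply_nonneg fun _ => hω
      filter_upwards [condExp_nonneg h0, hkey N t] with ω h h'
      rw [← h']; exact h
    rw [← ae_all_iff] at hN
    filter_upwards [hN] with ω hω
    obtain ⟨N, hNω⟩ := (Filter.tendsto_atTop.mp (hτi ω) (t + 1)).exists
    have := hω N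
    rwa [Set.indicator_of_mem (show ω ∈ {ω | t < τ N ω} from Nat.lt_of_succ_le hNω)] at this
  -- nonnegativity for all times `≤ T`
  have hnnaux : ∀ d, ∀ᵐ ω ∂μ, 0 ≤ M (T - d) ω := by
    intro d
    induction d with
    | zero => simpa using hMT
    | succ d ih =>
      rcases le_or_gt T d with h | h
      · have hEq : T - (d + 1) = T - d := by omega
        rw [hEq]; exact ih
      · have hd : T - d = T - (d + 1) + 1 := by omega
        rw [hd] at ih
        exact step _ ih
  have hnn : ∀ t, t ≤ T → ∀ᵐ ω ∂μ, 0 ≤ M t ω := by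
    intro t ht
    have : T - (T - t) = t := by omega
    simpa [this] using hnnaux (T - t)
  -- adaptedness of M
  have hadp : ∀ t, StronglyMeasurable[ℱ t] (M t) := by
    intro t
    have hsm : ∀ N, StronglyMeasurable[ℱ t]
        (Set.indicator {ω | t ≤ τ N ω} (MeasureTheory.stoppedProcess M (fun ω => ((τ N ω : ℕ) : WithTop ℕ)) t)) :=
      fun N => ((hmart N).stronglyAdapted t).indicator (hsF' N t)
    refine stronglyMeasurable_of_tendsto atTop hsm (tendsto_pi_nhds.mpr fun ω => ?_)
    have hev : ∀ᶠ N in atTop,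
        Set.indicator {ω | t ≤ τ N ω} (MeasureTheory.stoppedProcess M (fun ω => ((τ N ω : ℕ) : WithTop ℕ)) t) ω = M t ω := by
      filter_upwards [Filter.tendsto_atTop.mp (hτi ω) t] with N hNω
      have hm : min t (τ N ω) = t := min_eq_left hNω
      rw [Set.indicator_of_mem (show ω ∈ {ω | t ≤ τ N ω} from hNω),
        stoppedProcess_eq_of_le (τ := fun ω => ((τ N ω : ℕ) : WithTop ℕ)) (WithTop.coe_le_coe.mpr hNω)]
    exact Tendsto.congr' (hev.mono fun N h => h.symm) tendsto_const_nhds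
  -- integrability for all times `≤ T`
  have hint : ∀ t, t ≤ T → Integrable (M t) μ := by
    intro t
    induction t with
    | zero =>
      intro _
      have hEq : M 0 = MeasureTheory.stoppedProcess M (fun ω => ((τ 0 ω : ℕ) : WithTop ℕ)) 0 := by
        funext ω; exact (stoppedProcess_eq_of_le (τ := fun ω => ((τ 0 ω : ℕ) : WithTop ℕ)) (by exact_mod_cast Nat.zero_le _)).symm
      rw [hEq]; exact (hmart 0).integrable 0
    | succ t ih =>
      intro h
      have htT : t ≤ T := le_trans (Nat.le_succ t) h
      have hMt := ih htT
      have h0 := hnn t htT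
      have h1 := hnn (t + 1) h
      -- uniform bound on the integrals of the truncations
      have hbound : ∀ N, ∫ ω, Set.indicator {ω | t < τ N ω} (M (t + 1)) ω ∂μ
          ≤ ∫ ω, M t ω ∂μ := by
        intro N
        rw [← integral_condExp (ℱ.le t) (f := Set.indicator {ω | t < τ N ω} (M (t + 1))), integral_congr_ae (hkey N t)]
        refine integral_mono_ae (hindint0 N t) hMt ?_
        filter_upwards [h0] with ω hω
        by_cases hs : t < τ N ω
        · simp [Set.indicator_of_mem, hs]
        · simpa [Set.indicator_of_notMem, hs] using hω
      refine ⟨((hadp (t + 1)).mono (ℱ.le _)).aestronglyMeasurable, ?_⟩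
      show (∫⁻ ω, ‖M (t + 1) ω‖ₑ ∂μ) < ⊤
      have hmeasN : ∀ N : ℕ, Measurable fun ω =>
          ENNReal.ofReal (Set.indicator {ω | t < τ N ω} (M (t + 1)) ω) := by
        intro N
        have : StronglyMeasurable (Set.indicator {ω | t < τ N ω} (M (t + 1))) := by
          rw [hind1 N t]
          exact (((hmart N).stronglyAdapted (t + 1)).mono (ℱ.le _)).indicator (ℱ.le t _ (hsF N t))
        exact ENNReal.measurable_ofReal.comp this.measurable
      have hle : ∫⁻ ω, ‖M (t + 1) ω‖ₑ ∂μ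
          ≤ Filter.liminf (fun N =>
            ∫⁻ ω, ENNReal.ofReal (Set.indicator {ω | t < τ N ω} (M (t + 1)) ω) ∂μ) atTop := by
        refine le_trans (le_of_eq (lintegral_congr_ae ?_)) (lintegral_liminf_le hmeasN)
        filter_upwards [h1] with ω hω
        have hev : ∀ᶠ N in atTop,
            ENNReal.ofReal (Set.indicator {ω | t < τ N ω} (M (t + 1)) ω)
              = ENNReal.ofReal (M (t + 1) ω) := by
          filter_upwards [Filter.tendsto_atTop.mp (hτi ω) (t + 1)] with N hNω
          rw [Set.indicator_of_mem (show ω ∈ {ω | t < τ N ω} from Nat.lt_of_succ_le hNω)]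
        rw [Real.enorm_eq_ofReal hω]
        exact ((Filter.liminf_congr hev).trans (Filter.liminf_const _)).symm
      have hlim : Filter.liminf (fun N =>
          ∫⁻ ω, ENNReal.ofReal (Set.indicator {ω | t < τ N ω} (M (t + 1)) ω) ∂μ) atTop
          ≤ ENNReal.ofReal (∫ ω, M t ω ∂μ) := by
        refine Filter.liminf_le_of_frequently_le (Filter.Frequently.of_forall fun N => ?_)
        have hnnN : 0 ≤ᵐ[μ] Set.indicator {ω | t < τ N ω} (M (t + 1)) := by
          filter_upwards [h1] with ω hω
          exact Set.indicator_apply_nonneg fun _ => hω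
        rw [← ofReal_integral_eq_lintegral_ofReal (hindint1 N t) hnnN]
        exact ENNReal.ofReal_le_ofReal (hbound N)
      exact lt_of_le_of_lt (hle.trans hlim) ENNReal.ofReal_lt_top
  -- one-step martingale property
  have hstep : ∀ t, t + 1 ≤ T → M t =ᵐ[μ] μ[M (t + 1) | ℱ t] := by
    intro t ht
    have htT : t ≤ T := le_trans (Nat.le_succ t) ht
    refine ae_eq_condExp_of_forall_setIntegral_eq (ℱ.le t) (hint (t + 1) ht)
      (fun s _ _ => (hint t htT).integrableOn) ?_
      ((hadp t).aestronglyMeasurable)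
    intro s hs _
    have hsm : MeasurableSet s := ℱ.le t _ hs
    -- for each N the truncated identity on s
    have hNid : ∀ N, ∫ ω in s, Set.indicator {ω | t < τ N ω} (M (t + 1)) ω ∂μ
        = ∫ ω in s, Set.indicator {ω | t < τ N ω} (M t) ω ∂μ := by
      intro N
      rw [← setIntegral_condExp (ℱ.le t) (hindint1 N t) hs]
      exact setIntegral_congr_ae hsm (by filter_upwards [hkey N t] with ω h _ using h)
    have htend1 : Filter.Tendsto (fun N =>
        ∫ ω in s, Set.indicator {ω | t < τ N ω} (M (t + 1)) ω ∂μ) atTop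
        (nhds (∫ ω in s, M (t + 1) ω ∂μ)) := by
      refine tendsto_integral_of_dominated_convergence (fun ω => |M (t + 1) ω|)
        (fun N => ((hindint1 N t).aestronglyMeasurable).restrict) ((hint (t + 1) ht).abs.restrict)
        (fun N => Filter.Eventually.of_forall fun ω => ?_) (Filter.Eventually.of_forall fun ω => ?_)
      · by_cases hsω : t < τ N ω
        · simp [Set.indicator_of_mem, hsω, Real.norm_eq_abs]
        · simp [Set.indicator_of_notMem, hsω, abs_nonneg]
      · have hev : ∀ᶠ N in atTop,
            Set.indicator {ω | t < τ N ω} (M (t + 1)) ω = M (t + 1) ω := by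
          filter_upwards [Filter.tendsto_atTop.mp (hτi ω) (t + 1)] with N hNω
          rw [Set.indicator_of_mem (show ω ∈ {ω | t < τ N ω} from Nat.lt_of_succ_le hNω)]
        exact Tendsto.congr' (hev.mono fun N h => h.symm) tendsto_const_nhds
    have htend0 : Filter.Tendsto (fun N =>
        ∫ ω in s, Set.indicator {ω | t < τ N ω} (M t) ω ∂μ) atTop
        (nhds (∫ ω in s, M t ω ∂μ)) := by
      refine tendsto_integral_of_dominated_convergence (fun ω => |M t ω|)
        (fun N => ((hindint0 N t).aestronglyMeasurable).restrict) ((hint t htT).abs.restrict)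
        (fun N => Filter.Eventually.of_forall fun ω => ?_) (Filter.Eventually.of_forall fun ω => ?_)
      · by_cases hsω : t < τ N ω
        · simp [Set.indicator_of_mem, hsω, Real.norm_eq_abs]
        · simp [Set.indicator_of_notMem, hsω, abs_nonneg]
      · have hev : ∀ᶠ N in atTop,
            Set.indicator {ω | t < τ N ω} (M t) ω = M t ω := by
          filter_upwards [Filter.tendsto_atTop.mp (hτi ω) (t + 1)] with N hNω
          rw [Set.indicator_of_mem (show ω ∈ {ω | t < τ N ω} from Nat.lt_of_succ_le hNω)]
        exact Tendsto.congr' (hev.mono fun N h => h.symm) tendsto_const_nhds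
    exact (tendsto_nhds_unique (htend1.congr hNid) htend0).symm
  -- multi-step martingale property
  have hsteps : ∀ i j, i ≤ j → j ≤ T → μ[M j | ℱ i] =ᵐ[μ] M i := by
    intro i j hij
    induction j, hij using Nat.le_induction with
    | base =>
      intro hiT
      rw [condExp_of_stronglyMeasurable (ℱ.le i) (hadp i) (hint i hiT)]
    | succ j hij ih =>
      intro hT1
      have h1 : μ[M (j + 1) | ℱ i] =ᵐ[μ] μ[μ[M (j + 1) | ℱ j] | ℱ i] :=
        (condExp_condExp_of_le (ℱ.mono hij) (ℱ.le j)).symm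
      refine h1.trans (EventuallyEq.trans ?_ (ih (le_trans (Nat.le_succ j) hT1)))
      exact condExp_congr_ae (hstep j hT1).symm
  refine ⟨hint, ?_, ?_⟩
  · intro t
    exact (hadp (min t T)).mono (ℱ.mono (min_le_left t T))
  · intro i j hij
    by_cases hjT : j ≤ T
    · have h1 : min j T = j := min_eq_left hjT
      have h2 : min i T = i := min_eq_left (le_trans hij hjT)
      simp only [h1, h2]
      exact hsteps i j hij hjT
    · push_neg at hjT
      have h1 : min j T = T := min_eq_right hjT.le
      simp only [h1]
      by_cases hiT : i ≤ T
      · have h2 : min i T = i := min_eq_left hiT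
        simp only [h2]
        exact hsteps i T hiT le_rfl
      · push_neg at hiT
        have h2 : min i T = T := min_eq_right hiT.le
        simp only [h2]
        rw [condExp_of_stronglyMeasurable (ℱ.le i) ((hadp T).mono (ℱ.mono hiT.le))
          (hint T le_rfl)]
end
end
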